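/- For n ≥ 3 and the standard n-simplex Tₙ, the rule L(f) = ((n+1)/((n+2)·n!))·f(Pₙ₊₁) + (1/(n+2)!)·Σⱼ₌₀ⁿ f(Pⱼ) is not exact for f = x₁x₂x₃: L(f) = 1/((n+1)·(n+2)!) while ∫_{Tₙ} x₁x₂x₃ dV = 1/(n+3)!. -/

import Mathlib

open MeasureTheory

/-- The standard n-simplex in ℝⁿ. -/
def Simplex (n : ℕ) : Set (Fin n → ℝ) := {v | (∀ i, 0 ≤ v i) ∧ ∑ i, v i ≤ 1}

/-- The vertices of the standard n-simplex: `P 0 = 0` and `P (k+1)` is the k-th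
standard basis vector. -/
def simplexVertex (n : ℕ) (j : Fin (n + 1)) : Fin n → ℝ :=
  fun i => if (j : ℕ) = (i : ℕ) + 1 then 1 else 0

namespace SimplexAux

/-- The simplex scaled by `t`. -/
def S (n : ℕ) (t : ℝ) : Set (Fin n → ℝ) := {v | (∀ i, 0 ≤ v i) ∧ ∑ i, v i ≤ t}

/-- The monomial `x₀x₁x₂` (truncated for small `n`). -/
def g (n : ℕ) : (Fin n → ℝ) → ℝ := fun v => ∏ i, (if i.val < 3 then v i else 1)

lemma continuous_g (n : ℕ) : Continuous (g n) := by
  unfold g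
  apply continuous_finset_prod
  intro i _
  by_cases h : i.val < 3 <;> simp only [h, if_true, if_false]
  · exact continuous_apply i
  · exact continuous_const

lemma isClosed_S (n : ℕ) (t : ℝ) : IsClosed (S n t) := by
  have h : S n t = (⋂ i, {v : Fin n → ℝ | 0 ≤ v i}) ∩ {v | ∑ i, v i ≤ t} := by
    ext v; simp [S, Set.mem_iInter]
  rw [h]
  exact (isClosed_iInter fun i => isClosed_le continuous_const (continuous_apply i)).inter
    (isClosed_le (continuous_finset_sum _ fun i _ => continuous_apply i) continuous_const)

lemma isCompact_S (n : ℕ) (t : ℝ) : IsCompact (S n t) := by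
  refine (isCompact_Icc (a := (0 : Fin n → ℝ)) (b := fun _ => max t 0)).of_isClosed_subset
    (isClosed_S n t) ?_
  intro v hv
  obtain ⟨h0, hs⟩ := hv
  constructor
  · intro i; exact h0 i
  · intro i
    have : v i ≤ ∑ j, v j := Finset.single_le_sum (fun j _ => h0 j) (Finset.mem_univ i)
    exact le_max_of_le_left (this.trans hs)

lemma integrable_ind (n : ℕ) (t : ℝ) : Integrable ((S n t).indicator (g n)) := by
  rw [integrable_indicator_iff (isClosed_S n t).measurableSet]
  exact (continuous_g n).continuousOn.integrableOn_compact (isCompact_S n t)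

lemma int_A (k : ℕ) (t : ℝ) : ∫ x in (0:ℝ)..t, (t - x) ^ k = t ^ (k+1) / (k+1) := by
  rw [intervalIntegral.integral_comp_sub_left (fun x => x ^ k) t]
  simp [integral_pow]

lemma int_B (k : ℕ) (t : ℝ) :
    ∫ x in (0:ℝ)..t, x * (t - x) ^ k = t ^ (k+2) / ((k+1)*(k+2)) := by
  have hpt : ∀ x : ℝ, x * (t - x) ^ k = t * (t - x) ^ k - (t - x) ^ (k+1) := by
    intro x; rw [pow_succ]; ring
  simp only [hpt]
  rw [intervalIntegral.integral_sub, intervalIntegral.integral_const_mul, int_A, int_A]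
  · have h1 : (k:ℝ) + 1 ≠ 0 := by positivity
    have h2 : (k:ℝ) + 2 ≠ 0 := by positivity
    field_simp
    push_cast; ring
  · exact ((continuous_const.mul ((continuous_const.sub continuous_id).pow k)).intervalIntegrable 0 t)
  · exact (((continuous_const.sub continuous_id).pow (k+1)).intervalIntegrable 0 t)


lemma key_zero (t : ℝ) :
    (∫ v in S 0 t, g 0 v) = if 0 ≤ t then 1 else 0 := by
  have hg : g 0 = fun _ => (1:ℝ) := by funext v; simp [g]
  by_cases ht : 0 ≤ t
  · have hS : S 0 t = Set.univ := by ext v; simp [S, ht]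
    rw [hS, hg, if_pos ht]
    simp [MeasureTheory.volume_pi, Measure.pi_empty_univ, measureReal_def]
  · have hS : S 0 t = ∅ := by
      ext v; simpa [S] using ht
    rw [hS, if_neg ht]; simp

lemma esymm_eq (n : ℕ) (x : ℝ) (y : Fin n → ℝ) :
    (MeasurableEquiv.piFinSuccAbove (fun _ : Fin (n+1) => ℝ) (Fin.last n)).symm (x, y)
      = Fin.snoc y x := by
  simp [MeasurableEquiv.piFinSuccAbove_symm_apply, Fin.insertNth_last', Fin.snocEquiv]

lemma mem_S_snoc (n : ℕ) (t x : ℝ) (y : Fin n → ℝ) :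
    (Fin.snoc y x ∈ S (n+1) t) ↔ (0 ≤ x ∧ y ∈ S n (t - x)) := by
  simp only [S, Set.mem_setOf_eq, Fin.forall_fin_succ', Fin.sum_univ_castSucc,
    Fin.snoc_castSucc, Fin.snoc_last]
  constructor
  · rintro ⟨⟨h0, hx⟩, hs⟩; exact ⟨hx, h0, by linarith⟩
  · rintro ⟨hx, h0, hs⟩; exact ⟨⟨h0, hx⟩, by linarith⟩

lemma g_snoc (n : ℕ) (x : ℝ) (y : Fin n → ℝ) :
    g (n+1) (Fin.snoc y x) = (if n < 3 then x else 1) * g n y := by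
  simp only [g, Fin.prod_univ_castSucc, Fin.snoc_castSucc, Fin.snoc_last,
    Fin.coe_castSucc, Fin.val_last]
  rw [mul_comm]


lemma key (n : ℕ) (t : ℝ) :
    (∫ v in S n t, g n v) =
      if 0 ≤ t then t ^ (n + min n 3) / (Nat.factorial (n + min n 3)) else 0 := by
  induction n generalizing t with
  | zero => simpa using key_zero t
  | succ n ih =>
    set e := MeasurableEquiv.piFinSuccAbove (fun _ : Fin (n+1) => ℝ) (Fin.last n) with he
    have mp := (volume_preserving_piFinSuccAbove (fun _ : Fin (n+1) => ℝ) (Fin.last n))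
    set G := (S (n+1) t).indicator (g (n+1)) with hG
    set m := n + min n 3 with hm
    set c : ℝ → ℝ := fun x => if n < 3 then x else 1 with hc
    -- pointwise formula
    have hpt : ∀ (x : ℝ) (y : Fin n → ℝ),
        G (e.symm (x, y)) = if 0 ≤ x then c x * (S n (t-x)).indicator (g n) y else 0 := by
      intro x y
      rw [esymm_eq]
      by_cases hx : 0 ≤ x
      · by_cases hy : y ∈ S n (t - x)
        · rw [hG, Set.indicator_of_mem ((mem_S_snoc n t x y).2 ⟨hx, hy⟩),
            Set.indicator_of_mem hy, g_snoc, if_pos hx]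
        · rw [hG, Set.indicator_of_notMem (fun h => hy ((mem_S_snoc n t x y).1 h).2),
            Set.indicator_of_notMem hy, if_pos hx, mul_zero]
      · rw [hG, Set.indicator_of_notMem (fun h => hx ((mem_S_snoc n t x y).1 h).1), if_neg hx]
    -- set up the Fubini reduction
    have hGi : Integrable G := integrable_ind (n+1) t
    have hGi2 : Integrable (fun p : ℝ × (Fin n → ℝ) => G (e.symm p)) :=
      ((mp.symm e).integrable_comp_emb e.symm.measurableEmbedding).2 hGi
    have step1 : (∫ v in S (n+1) t, g (n+1) v) = ∫ v, G v :=
      (integral_indicator (isClosed_S (n+1) t).measurableSet).symm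
    have step2 : (∫ v, G v) = ∫ p : ℝ × (Fin n → ℝ), G (e.symm p) :=
      ((mp.symm e).integral_comp' G).symm
    have step3 : (∫ p : ℝ × (Fin n → ℝ), G (e.symm p))
        = ∫ x : ℝ, ∫ y : Fin n → ℝ, G (e.symm (x, y)) := by
      rw [show (volume : Measure (ℝ × (Fin n → ℝ))) = Measure.prod volume volume from rfl] at hGi2 ⊢
      exact integral_prod _ hGi2
    -- inner integral
    have inner : ∀ x : ℝ, (∫ y : Fin n → ℝ, G (e.symm (x, y)))
        = Set.indicator (Set.Icc 0 t) (fun x => c x * ((t-x) ^ m / (Nat.factorial m))) x := by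
      intro x
      simp only [hpt]
      by_cases hx : 0 ≤ x
      · simp only [if_pos hx]
        rw [integral_const_mul, integral_indicator (isClosed_S n (t-x)).measurableSet, ih]
        by_cases hxt : x ≤ t
        · rw [Set.indicator_of_mem (Set.mem_Icc.2 ⟨hx, hxt⟩), if_pos (by linarith)]
        · rw [Set.indicator_of_notMem (by simp [Set.mem_Icc, hxt]), if_neg (by intro h; exact hxt (by linarith)), mul_zero]
      · simp only [if_neg hx, integral_zero]
        rw [Set.indicator_of_notMem (by simp [Set.mem_Icc]; intro h; exact absurd h hx)]
    rw [step1, step2, step3]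
    simp only [inner]
    rw [integral_indicator measurableSet_Icc]
    by_cases ht : 0 ≤ t
    · rw [if_pos ht, MeasureTheory.integral_Icc_eq_integral_Ioc,
        ← intervalIntegral.integral_of_le ht]
      have h0 : ((Nat.factorial m : ℝ)) ≠ 0 := Nat.cast_ne_zero.2 (Nat.factorial_ne_zero m)
      have h1 : ((m:ℝ)+1) ≠ 0 := by positivity
      have h2 : ((m:ℝ)+2) ≠ 0 := by positivity
      by_cases h3 : n < 3
      · have hM : n + 1 + min (n+1) 3 = m + 2 := by rw [hm]; omega
        rw [hM]
        simp only [hc, if_pos h3]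
        have hb : ∀ x:ℝ, x * ((t-x)^m / (Nat.factorial m))
            = (x * (t-x)^m) / (Nat.factorial m) := fun x => by ring
        simp only [hb]
        rw [intervalIntegral.integral_div, int_B]
        have hfact : ((Nat.factorial (m+2) : ℝ)) = ((m:ℝ)+2) * (((m:ℝ)+1) * (Nat.factorial m)) := by
          rw [Nat.factorial_succ, Nat.factorial_succ]; push_cast; ring
        rw [hfact, div_div]
        ring_nf
      · have hM : n + 1 + min (n+1) 3 = m + 1 := by rw [hm]; omega
        rw [hM]
        simp only [hc, if_neg h3, one_mul]
        rw [intervalIntegral.integral_div, int_A]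
        have hfact : ((Nat.factorial (m+1) : ℝ)) = ((m:ℝ)+1) * (Nat.factorial m) := by
          rw [Nat.factorial_succ]; push_cast; ring
        rw [hfact, div_div]
    · have hIcc : Set.Icc (0:ℝ) t = ∅ := Set.Icc_eq_empty (by linarith)
      rw [hIcc, if_neg ht]
      simp


lemma g_eq (n : ℕ) (hn : 2 < n) (v : Fin n → ℝ) :
    g n v = v ⟨0, by omega⟩ * v ⟨1, by omega⟩ * v ⟨2, by omega⟩ := by
  have hfil : Finset.univ.filter (fun i : Fin n => i.val < 3)
      = {⟨0, by omega⟩, ⟨1, by omega⟩, ⟨2, by omega⟩} := by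
    ext i
    simp [Finset.mem_filter, Finset.mem_insert, Fin.ext_iff]
    omega
  rw [g, ← Finset.prod_filter, hfil]
  rw [Finset.prod_insert (by simp [Fin.ext_iff]), Finset.prod_insert (by simp [Fin.ext_iff]),
    Finset.prod_singleton]
  ring


end SimplexAux

theorem stmt_11 (n : ℕ) (hn : 3 ≤ n) :
    let f : (Fin n → ℝ) → ℝ := fun v =>
      v ⟨0, by omega⟩ * v ⟨1, by omega⟩ * v ⟨2, by omega⟩
    ((n + 1 : ℝ) / ((n + 2) * (Nat.factorial n : ℝ))) * f (fun _ => 1 / (n + 1 : ℝ))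
        + (1 / (Nat.factorial (n + 2) : ℝ)) * ∑ j : Fin (n + 1), f (simplexVertex n j)
      = 1 / ((n + 1 : ℝ) * (Nat.factorial (n + 2) : ℝ)) ∧
    (∫ v in Simplex n, f v) = 1 / (Nat.factorial (n + 3) : ℝ) ∧
    1 / ((n + 1 : ℝ) * (Nat.factorial (n + 2) : ℝ)) ≠ 1 / (Nat.factorial (n + 3) : ℝ) := by
  intro f
  have hn1 : ((n:ℝ) + 1) ≠ 0 := by positivity
  have hn2 : ((n:ℝ) + 2) ≠ 0 := by positivity
  have hfn : ((Nat.factorial n : ℝ)) ≠ 0 := Nat.cast_ne_zero.2 (Nat.factorial_ne_zero n)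
  have hf2 : ((Nat.factorial (n+2) : ℝ)) ≠ 0 := Nat.cast_ne_zero.2 (Nat.factorial_ne_zero _)
  have hf3 : ((Nat.factorial (n+3) : ℝ)) ≠ 0 := Nat.cast_ne_zero.2 (Nat.factorial_ne_zero _)
  refine ⟨?_, ?_, ?_⟩
  · have hsum : ∀ j : Fin (n + 1), f (simplexVertex n j) = 0 := by
      intro j
      show simplexVertex n j ⟨0, by omega⟩ * simplexVertex n j ⟨1, by omega⟩
          * simplexVertex n j ⟨2, by omega⟩ = 0
      simp only [simplexVertex]
      by_cases h1 : (j : ℕ) = 0 + 1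
      · have h2 : ¬ ((j : ℕ) = 1 + 1) := by omega
        simp [h1, h2]
      · simp [h1]
    rw [Finset.sum_congr rfl (fun j _ => hsum j)]
    show ((n + 1 : ℝ) / ((n + 2) * (Nat.factorial n : ℝ)))
        * ((1/((n:ℝ)+1)) * (1/((n:ℝ)+1)) * (1/((n:ℝ)+1))) + _ = _
    rw [Finset.sum_const_zero, mul_zero, add_zero]
    have hf2e : ((Nat.factorial (n+2) : ℝ)) = ((n:ℝ)+2) * (((n:ℝ)+1) * (Nat.factorial n)) := by
      rw [Nat.factorial_succ, Nat.factorial_succ]; push_cast; ring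
    rw [hf2e]
    field_simp
  · have hS : Simplex n = SimplexAux.S n 1 := rfl
    have hfg : ∀ v : Fin n → ℝ, f v = SimplexAux.g n v := fun v => (SimplexAux.g_eq n hn v).symm
    calc (∫ v in Simplex n, f v) = ∫ v in SimplexAux.S n 1, SimplexAux.g n v := by
          rw [hS]; exact setIntegral_congr_fun (SimplexAux.isClosed_S n 1).measurableSet
            (fun v _ => hfg v)
      _ = 1 / (Nat.factorial (n + 3) : ℝ) := by
          rw [SimplexAux.key n 1, if_pos (by norm_num), min_eq_right hn, one_pow, one_div]
  · intro h
    have hf3e : ((Nat.factorial (n+3) : ℝ)) = ((n:ℝ)+3) * (Nat.factorial (n+2)) := by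
      rw [Nat.factorial_succ]; push_cast; ring
    rw [hf3e, div_eq_div_iff (by positivity) (by positivity)] at h
    have hpos : (0:ℝ) < (Nat.factorial (n+2) : ℝ) := by positivity
    nlinarith
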